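/- A 0/1 matrix in which the ones in every row appear consecutively (consecutive-ones property on rows) is totally unimodular. -/
import Mathlib

open Matrix Finset

/-- "difference" upper unitriangular matrix -/
private def Tmat (k : ℕ) : Matrix (Fin k) (Fin k) ℤ :=
  fun i j => if i = j then 1 else if (i : ℕ) + 1 = (j : ℕ) then -1 else 0

private lemma detTmat (k : ℕ) : (Tmat k).det = 1 := by
  rw [Matrix.det_of_upperTriangular]
  · simp [Tmat]
  · intro i j hji
    have hji' : (j : ℕ) < (i : ℕ) := hji
    have h1 : i ≠ j := by rw [Ne, Fin.ext_iff]; omega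
    have h2 : (i : ℕ) + 1 ≠ (j : ℕ) := by omega
    simp [Tmat, h1, h2]

private def prevF {k : ℕ} (l : Fin k) : Fin k :=
  ⟨(l : ℕ) - 1, lt_of_le_of_lt (Nat.sub_le _ _) l.isLt⟩

private lemma mulTmat {k : ℕ} (B : Matrix (Fin k) (Fin k) ℤ) (i l : Fin k) :
    (B * Tmat k) i l = B i l - (if 0 < (l : ℕ) then B i (prevF l) else 0) := by
  rw [Matrix.mul_apply]
  split_ifs with h
  · have hne : prevF l ≠ l :=
      Fin.ne_of_val_ne (by show (l : ℕ) - 1 ≠ (l : ℕ); omega)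
    rw [← Finset.sum_subset (Finset.subset_univ {prevF l, l})]
    · rw [Finset.sum_pair hne]
      have h1 : Tmat k (prevF l) l = -1 := by
        simp only [Tmat]
        rw [if_neg hne, if_pos]
        show (l : ℕ) - 1 + 1 = (l : ℕ); omega
      have h2 : Tmat k l l = 1 := by simp [Tmat]
      rw [h1, h2]; ring
    · intro x _ hx
      simp only [Finset.mem_insert, Finset.mem_singleton] at hx
      push_neg at hx
      have : Tmat k x l = 0 := by
        simp only [Tmat]
        rw [if_neg hx.2, if_neg]
        intro hh
        apply hx.1
        apply Fin.val_injective
        show (x : ℕ) = (l : ℕ) - 1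
        omega
      simp [this]
  · rw [Finset.sum_eq_single l]
    · simp [Tmat]
    · intro x _ hx
      have : Tmat k x l = 0 := by
        simp only [Tmat]
        rw [if_neg hx, if_neg]; omega
      simp [this]
    · intro hl; exact absurd (Finset.mem_univ l) hl

private lemma lemA : ∀ (k : ℕ) (M : Matrix (Fin k) (Fin k) ℤ),
    (∀ i j, M i j = -1 ∨ M i j = 0 ∨ M i j = 1) →
    (∀ (j i i' : Fin k), M i j = 1 → M i' j = 1 → i = i') →
    (∀ (j i i' : Fin k), M i j = -1 → M i' j = -1 → i = i') →
    M.det = -1 ∨ M.det = 0 ∨ M.det = 1 := by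
  intro k
  induction k with
  | zero => intro M _ _ _; right; right; exact Matrix.det_fin_zero
  | succ k ih =>
    intro M hE h1 h2
    by_cases hcol : ∀ j : Fin (k+1), ∃ i₁ i₂, i₁ ≠ i₂ ∧ M i₁ j ≠ 0 ∧ M i₂ j ≠ 0
    · right; left
      rw [← Matrix.exists_vecMul_eq_zero_iff]
      refine ⟨fun _ => 1, ?_, ?_⟩
      · intro hv
        have := congrFun hv 0
        simp at this
      · funext j
        obtain ⟨i₁, i₂, hne, hv1, hv2⟩ := hcol j
        -- determine the two values
        have hvals : (M i₁ j = 1 ∧ M i₂ j = -1) ∨ (M i₁ j = -1 ∧ M i₂ j = 1) := by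
          rcases hE i₁ j with ha | ha | ha <;> rcases hE i₂ j with hb | hb | hb
          · exact absurd (h2 j i₁ i₂ ha hb) hne
          · exact absurd hb hv2
          · exact Or.inr ⟨ha, hb⟩
          · exact absurd ha hv1
          · exact absurd ha hv1
          · exact absurd ha hv1
          · exact Or.inl ⟨ha, hb⟩
          · exact absurd hb hv2
          · exact absurd (h1 j i₁ i₂ ha hb) hne
        have hzero : ∀ i, i ∉ ({i₁, i₂} : Finset (Fin (k+1))) → M i j = 0 := by
          intro i hi
          simp only [Finset.mem_insert, Finset.mem_singleton] at hi
          push_neg at hi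
          rcases hE i j with hc | hc | hc
          · rcases hvals with ⟨ha, hb⟩ | ⟨ha, hb⟩
            · exact absurd (h2 j i i₂ hc hb) hi.2
            · exact absurd (h2 j i i₁ hc ha) hi.1
          · exact hc
          · rcases hvals with ⟨ha, hb⟩ | ⟨ha, hb⟩
            · exact absurd (h1 j i i₁ hc ha) hi.1
            · exact absurd (h1 j i i₂ hc hb) hi.2
        show ∑ i, 1 * M i j = 0
        simp only [one_mul]
        rw [← Finset.sum_subset (Finset.subset_univ {i₁, i₂}) (fun x _ hx => hzero x hx),
          Finset.sum_pair hne]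
        rcases hvals with ⟨ha, hb⟩ | ⟨ha, hb⟩ <;> rw [ha, hb] <;> ring
    · push_neg at hcol
      obtain ⟨j, hj⟩ := hcol
      by_cases hz : ∀ i, M i j = 0
      · right; left; exact Matrix.det_eq_zero_of_column_eq_zero j hz
      · push_neg at hz
        obtain ⟨i₀, hi₀⟩ := hz
        have hone : ∀ i, i ≠ i₀ → M i j = 0 := by
          intro i hi
          exact hj i₀ i (Ne.symm hi) hi₀
        rw [Matrix.det_succ_column M j, Finset.sum_eq_single i₀]
        · have hminor := ih (M.submatrix i₀.succAbove j.succAbove)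
            (fun i' j' => hE _ _)
            (fun j' i' i'' ha hb => Fin.succAbove_right_injective
              (h1 _ _ _ ha hb))
            (fun j' i' i'' ha hb => Fin.succAbove_right_injective
              (h2 _ _ _ ha hb))
          rcases neg_one_pow_eq_or ℤ ((i₀ : ℕ) + (j : ℕ)) with hp | hp <;>
            rcases hE i₀ j with hv | hv | hv <;>
            try exact absurd hv hi₀
          all_goals
            rcases hminor with hm | hm | hm <;> rw [hp, hv, hm] <;> norm_num
        · intro i _ hi
          rw [hone i hi]
          ring
        · intro hmem
          exact absurd (Finset.mem_univ i₀) hmem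

private lemma lemB {k : ℕ} (B : Matrix (Fin k) (Fin k) ℤ)
    (h01 : ∀ i j, B i j = 0 ∨ B i j = 1)
    (hco : ∀ (i j₁ j₂ j₃ : Fin k), j₁ ≤ j₂ → j₂ ≤ j₃ →
      B i j₁ = 1 → B i j₃ = 1 → B i j₂ = 1) :
    B.det = -1 ∨ B.det = 0 ∨ B.det = 1 := by
  have hdet : (B * Tmat k).det = B.det := by rw [Matrix.det_mul, detTmat, mul_one]
  rw [← hdet, ← Matrix.det_transpose]
  set C := B * Tmat k with hC
  have hCval : ∀ i l, C i l = B i l - (if 0 < (l : ℕ) then B i (prevF l) else 0) :=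
    mulTmat B
  have hpos : ∀ i l, C i l = 1 → B i l = 1 := by
    intro i l h
    rw [hCval] at h
    split_ifs at h with hl
    · rcases h01 i l with ha | ha <;> rcases h01 i (prevF l) with hb | hb <;> omega
    · rcases h01 i l with ha | ha <;> omega
  have hpos' : ∀ i (l : Fin k), 0 < (l : ℕ) → C i l = 1 → B i (prevF l) = 0 := by
    intro i l hl h
    rw [hCval, if_pos hl] at h
    rcases h01 i l with ha | ha <;> rcases h01 i (prevF l) with hb | hb <;> omega
  have hneg : ∀ i l, C i l = -1 → 0 < (l : ℕ) ∧ B i l = 0 ∧ B i (prevF l) = 1 := by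
    intro i l h
    rw [hCval] at h
    split_ifs at h with hl
    · refine ⟨hl, ?_, ?_⟩ <;>
        rcases h01 i l with ha | ha <;> rcases h01 i (prevF l) with hb | hb <;> omega
    · rcases h01 i l with ha | ha <;> omega
  have key1 : ∀ i (l l' : Fin k), l < l' → C i l = 1 → C i l' = 1 → False := by
    intro i l l' hll h h'
    have hlt : (l : ℕ) < (l' : ℕ) := hll
    have hBl : B i l = 1 := hpos i l h
    have hBl' : B i l' = 1 := hpos i l' h'
    have hBp : B i (prevF l') = 0 := hpos' i l' (by omega) h'
    have : B i (prevF l') = 1 :=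
      hco i l (prevF l') l'
        (by rw [Fin.le_def]; show (l : ℕ) ≤ (l' : ℕ) - 1; omega)
        (by rw [Fin.le_def]; show (l' : ℕ) - 1 ≤ (l' : ℕ); omega)
        hBl hBl'
    omega
  have key2 : ∀ i (l l' : Fin k), l < l' → C i l = -1 → C i l' = -1 → False := by
    intro i l l' hll h h'
    have hlt : (l : ℕ) < (l' : ℕ) := hll
    obtain ⟨hl, hBl0, hBp1⟩ := hneg i l h
    obtain ⟨hl', hBl'0, hBp'1⟩ := hneg i l' h'
    have : B i l = 1 :=
      hco i (prevF l) l (prevF l')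
        (by rw [Fin.le_def]; show (l : ℕ) - 1 ≤ (l : ℕ); omega)
        (by rw [Fin.le_def]; show (l : ℕ) ≤ (l' : ℕ) - 1; omega)
        hBp1 hBp'1
    omega
  refine lemA k Cᵀ ?_ ?_ ?_
  · intro a b
    show C b a = -1 ∨ C b a = 0 ∨ C b a = 1
    rw [hCval]
    split_ifs with hl
    · rcases h01 b a with ha | ha <;> rcases h01 b (prevF a) with hb | hb <;> omega
    · rcases h01 b a with ha | ha <;> omega
  · intro b a a' ha ha'
    rcases lt_trichotomy a a' with h | h | h
    · exact (key1 b a a' h ha ha').elim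
    · exact h
    · exact (key1 b a' a h ha' ha).elim
  · intro b a a' ha ha'
    rcases lt_trichotomy a a' with h | h | h
    · exact (key2 b a a' h ha ha').elim
    · exact h
    · exact (key2 b a' a h ha' ha).elim

/-- A 0/1 matrix in which the ones in every row appear consecutively (consecutive-ones
property on rows) is totally unimodular: every square submatrix has determinant
in `{-1, 0, 1}`. -/
theorem stmt8 {m n : ℕ} (A : Matrix (Fin m) (Fin n) ℤ)
    (h01 : ∀ i j, A i j = 0 ∨ A i j = 1)
    (hco : ∀ (i : Fin m) (j₁ j₂ j₃ : Fin n), j₁ ≤ j₂ → j₂ ≤ j₃ →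
      A i j₁ = 1 → A i j₃ = 1 → A i j₂ = 1) :
    ∀ (k : ℕ) (r : Fin k → Fin m) (s : Fin k → Fin n),
      Function.Injective r → Function.Injective s →
      (A.submatrix r s).det ∈ ({-1, 0, 1} : Set ℤ) := by
  intro k r s hr hs
  have hmono := Tuple.monotone_sort s
  set σ := Tuple.sort s with hσ
  have key := lemB (A.submatrix r (s ∘ σ))
    (fun i j => h01 _ _)
    (fun i j₁ j₂ j₃ h12 h23 ha hb =>
      hco (r i) _ _ _ (hmono h12) (hmono h23) ha hb)
  have heq : A.submatrix r (s ∘ σ) = (A.submatrix r s).submatrix id σ := rfl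
  have hp := Matrix.det_permute' σ (A.submatrix r s)
  rw [← heq] at hp
  simp only [Set.mem_insert_iff, Set.mem_singleton_iff]
  rcases Int.units_eq_one_or (Equiv.Perm.sign σ) with hu | hu <;>
    rw [hu] at hp <;> simp at hp <;>
    rcases key with hk | hk | hk <;> rw [hk] at hp <;> omega
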